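/- Let m ≥ 9 and S = ⟨m, m+1, ..., 2m-5⟩. Then the void of S is M(S) = {1, 2, 3, 2m-4, 2m-3, 2m-2}. -/

import Mathlib

lemma aux_hi9 (m : ℕ) (hm : 9 ≤ m) :
    ∀ n, 2 * m ≤ n → n ∈ AddSubmonoid.closure (Set.Icc m (2 * m - 5)) := by
  intro n
  induction n using Nat.strong_induction_on with
  | _ n ih =>
    intro hn
    by_cases h1 : n ≤ 3 * m - 5
    · have : n = (n - m) + m := by omega
      rw [this]
      exact add_mem (AddSubmonoid.subset_closure (by simp [Set.mem_Icc]; omega))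
        (AddSubmonoid.subset_closure (by simp [Set.mem_Icc]; omega))
    · by_cases h2 : n ≤ 4 * m - 10
      · have : n = (2 * m - 5) + (n - (2 * m - 5)) := by omega
        rw [this]
        exact add_mem (AddSubmonoid.subset_closure (by simp [Set.mem_Icc]; omega))
          (AddSubmonoid.subset_closure (by simp [Set.mem_Icc]; omega))
      · have : n = m + (n - m) := by omega
        rw [this]
        exact add_mem (AddSubmonoid.subset_closure (by simp [Set.mem_Icc]; omega))
          (ih (n - m) (by omega) (by omega))

lemma aux_mem9 (m : ℕ) (hm : 9 ≤ m) (n : ℕ) :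
    n ∈ AddSubmonoid.closure (Set.Icc m (2 * m - 5)) ↔
      n = 0 ∨ (m ≤ n ∧ n ≤ 2 * m - 5) ∨ 2 * m ≤ n := by
  constructor
  · intro h
    induction h using AddSubmonoid.closure_induction with
    | mem x hx => simp [Set.mem_Icc] at hx; omega
    | zero => left; rfl
    | add a b _ _ ha hb => omega
  · rintro (rfl | h | h)
    · exact zero_mem _
    · exact AddSubmonoid.subset_closure (by simp [Set.mem_Icc]; omega)
    · exact aux_hi9 m hm n h

theorem stmt_9 (m : ℕ) (hm : 9 ≤ m)
    (S : Set ℕ)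
    (hS : S = {n : ℕ | n ∈ AddSubmonoid.closure (Set.Icc m (2 * m - 5))})
    (F : ℕ) (hF : IsGreatest {n : ℕ | n ∉ S} F) :
    {x : ℕ | x ∉ S ∧ F - x ∉ S} =
      ({1, 2, 3, 2 * m - 4, 2 * m - 3, 2 * m - 2} : Set ℕ) := by
  subst hS
  have key : ∀ n : ℕ, n ∈ {n : ℕ | n ∈ AddSubmonoid.closure (Set.Icc m (2 * m - 5))} ↔
      n = 0 ∨ (m ≤ n ∧ n ≤ 2 * m - 5) ∨ 2 * m ≤ n := fun n => aux_mem9 m hm n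
  obtain ⟨hF1, hF2⟩ := hF
  have hFle : F ≤ 2 * m - 1 := by
    have := (key F).not.mp hF1
    omega
  have hFge : 2 * m - 1 ≤ F := hF2 (by rw [Set.mem_setOf_eq, key]; omega)
  have hFeq : F = 2 * m - 1 := le_antisymm hFle hFge
  ext x
  simp only [Set.mem_setOf_eq, Set.mem_insert_iff, Set.mem_singleton_iff, key, hFeq]
  omega
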